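/- Lemma 2 (free extension): Let F be the free (tensor) algebra on a set M, made a bialgebra with a comultiplication Δ̃ such that Δ̃(M) ⊂ span(M₁ ⊗ M₁) where M₁ = M ∪ {1}, and let C be a unital algebra that is a left F-module algebra via ξ̃. Then for any map φ : M → C there exists a unique linear map φ̃ : F → C with φ̃(1) = 1, φ̃|_M = φ, and φ̃(xy) = (ξ̃_{x₍₁₎}·φ̃(y))·φ̃(x₍₂₎) for all x, y ∈ F. -/

import Mathlib

open TensorProduct

set_option maxHeartbeats 1000000
set_option synthInstance.maxHeartbeats 400000

noncomputable def swF {F C : Type*} [Ring F] [Algebra ℂ F] [Ring C] [Algebra ℂ C]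
    (Δ : F →ₗ[ℂ] F ⊗[ℂ] F) (A B : F →ₗ[ℂ] C) : F →ₗ[ℂ] C :=
  LinearMap.mul' ℂ C ∘ₗ TensorProduct.map A B ∘ₗ Δ

noncomputable def actOnF {F C : Type*} [Ring F] [Algebra ℂ F] [Ring C] [Algebra ℂ C]
    (ξ : F →ₗ[ℂ] Module.End ℂ C) (f : C) : F →ₗ[ℂ] C :=
  LinearMap.applyₗ f ∘ₗ ξ

section aux
variable {M C : Type*} [Ring C] [Algebra ℂ C]

lemma actOnF_apply (ξ : FreeAlgebra ℂ M →ₗ[ℂ] Module.End ℂ C) (c : C) (x : FreeAlgebra ℂ M) :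
    actOnF ξ c x = ξ x c := rfl

lemma swF_apply (Δl : FreeAlgebra ℂ M →ₗ[ℂ] FreeAlgebra ℂ M ⊗[ℂ] FreeAlgebra ℂ M)
    (A B : FreeAlgebra ℂ M →ₗ[ℂ] C) (x : FreeAlgebra ℂ M) :
    swF Δl A B x = LinearMap.mul' ℂ C (TensorProduct.map A B (Δl x)) := rfl

lemma actOnF_add (ξ : FreeAlgebra ℂ M →ₗ[ℂ] Module.End ℂ C) (c c' : C) :
    actOnF ξ (c + c') = actOnF ξ c + actOnF ξ c' := by
  ext x; simp [actOnF_apply]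

lemma actOnF_smul (ξ : FreeAlgebra ℂ M →ₗ[ℂ] Module.End ℂ C) (r : ℂ) (c : C) :
    actOnF ξ (r • c) = r • actOnF ξ c := by
  ext x; simp [actOnF_apply]

noncomputable def Dgen (Δl : FreeAlgebra ℂ M →ₗ[ℂ] FreeAlgebra ℂ M ⊗[ℂ] FreeAlgebra ℂ M)
    (ξ : FreeAlgebra ℂ M →ₗ[ℂ] Module.End ℂ C) (φ : M → C) (m : M) : Module.End ℂ C where
  toFun c := swF Δl (actOnF ξ c) (FreeAlgebra.lift ℂ φ).toLinearMap (FreeAlgebra.ι ℂ m)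
  map_add' c c' := by
    simp only [swF_apply, actOnF_add, TensorProduct.map_add_left, LinearMap.add_apply, map_add]
  map_smul' r c := by
    simp only [swF_apply, actOnF_smul, TensorProduct.map_smul_left, LinearMap.smul_apply,
      map_smul, RingHom.id_apply]

noncomputable def Theta (Δl : FreeAlgebra ℂ M →ₗ[ℂ] FreeAlgebra ℂ M ⊗[ℂ] FreeAlgebra ℂ M)
    (ξ : FreeAlgebra ℂ M →ₗ[ℂ] Module.End ℂ C) (φ : M → C) :
    FreeAlgebra ℂ M →ₐ[ℂ] Module.End ℂ C :=
  FreeAlgebra.lift ℂ (Dgen Δl ξ φ)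

noncomputable def phit (Δl : FreeAlgebra ℂ M →ₗ[ℂ] FreeAlgebra ℂ M ⊗[ℂ] FreeAlgebra ℂ M)
    (ξ : FreeAlgebra ℂ M →ₗ[ℂ] Module.End ℂ C) (φ : M → C) :
    FreeAlgebra ℂ M →ₗ[ℂ] C :=
  LinearMap.applyₗ (1 : C) ∘ₗ (Theta Δl ξ φ).toLinearMap

lemma phit_apply (Δl : FreeAlgebra ℂ M →ₗ[ℂ] FreeAlgebra ℂ M ⊗[ℂ] FreeAlgebra ℂ M)
    (ξ : FreeAlgebra ℂ M →ₗ[ℂ] Module.End ℂ C) (φ : M → C) (x : FreeAlgebra ℂ M) :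
    phit Δl ξ φ x = Theta Δl ξ φ x 1 := rfl

end aux

theorem lemma2_free_extension {M C : Type*} [Ring C] [Algebra ℂ C]
    (Δ : FreeAlgebra ℂ M →ₐ[ℂ] FreeAlgebra ℂ M ⊗[ℂ] FreeAlgebra ℂ M)
    (ε : FreeAlgebra ℂ M →ₐ[ℂ] ℂ)
    (hcoassoc : ∀ x : FreeAlgebra ℂ M,
      (TensorProduct.assoc ℂ _ _ _)
        ((TensorProduct.map Δ.toLinearMap LinearMap.id) (Δ x)) =
      (TensorProduct.map LinearMap.id Δ.toLinearMap) (Δ x))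
    (hcounitl : ∀ x : FreeAlgebra ℂ M,
      (TensorProduct.lid ℂ (FreeAlgebra ℂ M))
        ((TensorProduct.map ε.toLinearMap LinearMap.id) (Δ x)) = x)
    (hcounitr : ∀ x : FreeAlgebra ℂ M,
      (TensorProduct.rid ℂ (FreeAlgebra ℂ M))
        ((TensorProduct.map LinearMap.id ε.toLinearMap) (Δ x)) = x)
    (hspan : ∀ m : M, Δ (FreeAlgebra.ι ℂ m) ∈
      Submodule.span ℂ {z : FreeAlgebra ℂ M ⊗[ℂ] FreeAlgebra ℂ M |
        ∃ a ∈ (Set.range (FreeAlgebra.ι ℂ (X := M)) ∪ {1}),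
        ∃ b ∈ (Set.range (FreeAlgebra.ι ℂ (X := M)) ∪ {1}), z = a ⊗ₜ[ℂ] b})
    (ξ : FreeAlgebra ℂ M →ₗ[ℂ] Module.End ℂ C)
    (hξone : ξ 1 = LinearMap.id)
    (hξmul : ∀ x y : FreeAlgebra ℂ M, ξ (x * y) = ξ x ∘ₗ ξ y)
    (hξunit : ∀ x : FreeAlgebra ℂ M, ξ x 1 = ε x • (1 : C))
    (hξleib : ∀ (x : FreeAlgebra ℂ M) (f g : C),
      ξ x (f * g) = swF Δ.toLinearMap (actOnF ξ f) (actOnF ξ g) x)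
    (φ : M → C) :
    ∃! φt : FreeAlgebra ℂ M →ₗ[ℂ] C,
      φt 1 = 1 ∧ (∀ m : M, φt (FreeAlgebra.ι ℂ m) = φ m) ∧
      ∀ x y : FreeAlgebra ℂ M,
        φt (x * y) = swF Δ.toLinearMap (actOnF ξ (φt y)) φt x := by
  set F := FreeAlgebra ℂ M with hF
  set Δl := Δ.toLinearMap with hΔl
  set Θ := Theta (C := C) Δl ξ φ with hΘ
  set φ0 := (FreeAlgebra.lift ℂ φ).toLinearMap with hφ0
  set Φ := phit Δl ξ φ with hΦ
  have hΔl_apply : ∀ x : F, Δl x = Δ x := fun _ => rfl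
  have hΘι : ∀ m : M, Θ (FreeAlgebra.ι ℂ m) = Dgen Δl ξ φ m := fun m =>
    FreeAlgebra.lift_ι_apply _ _
  have appl : ∀ (d : C) (f : Module.End ℂ C), LinearMap.applyₗ d f = f d := fun _ _ => rfl
  -- two linear maps agreeing on M₁ give equal swF values on Δ(ι m)
  have key : ∀ (A B B' : F →ₗ[ℂ] C), B 1 = B' 1 →
      (∀ m' : M, B (FreeAlgebra.ι ℂ m') = B' (FreeAlgebra.ι ℂ m')) → ∀ m : M,
      LinearMap.mul' ℂ C (TensorProduct.map A B (Δ (FreeAlgebra.ι ℂ m))) =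
      LinearMap.mul' ℂ C (TensorProduct.map A B' (Δ (FreeAlgebra.ι ℂ m))) := by
    intro A B B' h1 hι m
    refine Submodule.span_induction (p := fun z _ =>
      LinearMap.mul' ℂ C (TensorProduct.map A B z) =
      LinearMap.mul' ℂ C (TensorProduct.map A B' z)) ?_ ?_ ?_ ?_ (hspan m)
    · rintro z ⟨a, _, b, hb, rfl⟩
      simp only [TensorProduct.map_tmul, LinearMap.mul'_apply]
      rcases hb with ⟨m', rfl⟩ | hb
      · rw [hι]
      · rw [Set.mem_singleton_iff] at hb; subst hb; rw [h1]
    · simp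
    · intro z w _ _ hz hw; simp [map_add, hz, hw]
    · intro a z _ hz; simp [map_smul, hz]
  -- coassociativity shuffle
  have shuffle : ∀ (A B G : F →ₗ[ℂ] C) (x : F),
      LinearMap.mul' ℂ C (TensorProduct.map (swF Δl A B) G (Δ x)) =
      LinearMap.mul' ℂ C (TensorProduct.map A (swF Δl B G) (Δ x)) := by
    intro A B G x
    have e1 : ∀ z : F ⊗[ℂ] F,
        LinearMap.mul' ℂ C (TensorProduct.map (swF Δl A B) G z) =
        (LinearMap.mul' ℂ C ∘ₗ TensorProduct.map (LinearMap.mul' ℂ C ∘ₗ TensorProduct.map A B) G)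
          (TensorProduct.map Δl LinearMap.id z) := by
      intro z
      induction z using TensorProduct.induction_on with
      | zero => simp only [map_zero]
      | tmul u v => simp [swF_apply]
      | add a b ha hb => simp only [map_add, ha, hb]
    have e2 : ∀ z : F ⊗[ℂ] F,
        LinearMap.mul' ℂ C (TensorProduct.map A (swF Δl B G) z) =
        (LinearMap.mul' ℂ C ∘ₗ TensorProduct.map A (LinearMap.mul' ℂ C ∘ₗ TensorProduct.map B G))
          (TensorProduct.map LinearMap.id Δl z) := by
      intro z
      induction z using TensorProduct.induction_on with
      | zero => simp only [map_zero]
      | tmul u v => simp [swF_apply]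
      | add a b ha hb => simp only [map_add, ha, hb]
    have e3 : (LinearMap.mul' ℂ C ∘ₗ
          TensorProduct.map (LinearMap.mul' ℂ C ∘ₗ TensorProduct.map A B) G) =
        (LinearMap.mul' ℂ C ∘ₗ
          TensorProduct.map A (LinearMap.mul' ℂ C ∘ₗ TensorProduct.map B G)) ∘ₗ
          (TensorProduct.assoc ℂ F F F).toLinearMap := by
      refine TensorProduct.ext_threefold fun u v w => ?_
      simp [mul_assoc]
    rw [e1, e2, e3]
    simp only [LinearMap.comp_apply, LinearEquiv.coe_coe]
    rw [hcoassoc x]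
  -- the master identity
  have Q : ∀ (x : F) (c d : C), Θ x (c * d) =
      swF Δl (actOnF ξ c) (LinearMap.applyₗ d ∘ₗ Θ.toLinearMap) x := by
    intro x
    induction x using FreeAlgebra.induction with
    | grade0 r =>
      intro c d
      rw [AlgHom.commutes, Module.algebraMap_end_apply, swF_apply, hΔl_apply, AlgHom.commutes]
      rw [Algebra.TensorProduct.algebraMap_apply, Algebra.algebraMap_eq_smul_one]
      simp only [TensorProduct.smul_tmul', TensorProduct.map_tmul, map_smul,
        LinearMap.mul'_apply, LinearMap.smul_apply]
      rw [actOnF_apply, hξone]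
      simp only [LinearMap.id_apply, LinearMap.comp_apply, AlgHom.toLinearMap_apply, map_one,
        appl, Module.End.one_apply, smul_mul_assoc]
    | grade1 m =>
      intro c d
      have hleib : actOnF ξ (c * d) = swF Δl (actOnF ξ c) (actOnF ξ d) := by
        ext z; rw [actOnF_apply, hξleib]
      rw [hΘι m]
      show swF Δl (actOnF ξ (c * d)) φ0 (FreeAlgebra.ι ℂ m) = _
      rw [swF_apply, swF_apply, hΔl_apply, hleib, shuffle]
      refine key _ _ _ ?_ ?_ m
      · rw [swF_apply, hΔl_apply, map_one, Algebra.TensorProduct.one_def]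
        simp only [TensorProduct.map_tmul, LinearMap.mul'_apply, actOnF_apply, hξone,
          LinearMap.id_apply, LinearMap.comp_apply, AlgHom.toLinearMap_apply, map_one]
        simp only [appl, map_one, Module.End.one_apply, hφ0, AlgHom.toLinearMap_apply,
          FreeAlgebra.lift_ι_apply, mul_one, map_one]
      · intro m'
        rw [swF_apply]
        simp only [LinearMap.comp_apply, appl, AlgHom.toLinearMap_apply]
        rw [hΘι m']
        rfl
    | mul x y hx hy =>
      intro c d
      have step1 : ∀ (u v : F) (z : F ⊗[ℂ] F),
          LinearMap.mul' ℂ C (TensorProduct.map (actOnF ξ (ξ u c))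
            (LinearMap.applyₗ (Θ v d) ∘ₗ Θ.toLinearMap) z) =
          LinearMap.mul' ℂ C (TensorProduct.map (actOnF ξ c)
            (LinearMap.applyₗ d ∘ₗ Θ.toLinearMap) (z * (u ⊗ₜ[ℂ] v))) := by
        intro u v z
        induction z using TensorProduct.induction_on with
        | zero => simp only [map_zero, zero_mul]
        | tmul p q =>
          simp only [TensorProduct.map_tmul, LinearMap.mul'_apply, actOnF_apply,
            Algebra.TensorProduct.tmul_mul_tmul, LinearMap.comp_apply,
            appl, AlgHom.toLinearMap_apply, hξmul, map_mul,
            Module.End.mul_apply]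
        | add a b ha hb => simp only [add_mul, map_add, ha, hb]
      have step2 : ∀ z : F ⊗[ℂ] F,
          Θ x (LinearMap.mul' ℂ C (TensorProduct.map (actOnF ξ c)
            (LinearMap.applyₗ d ∘ₗ Θ.toLinearMap) z)) =
          LinearMap.mul' ℂ C (TensorProduct.map (actOnF ξ c)
            (LinearMap.applyₗ d ∘ₗ Θ.toLinearMap) (Δ x * z)) := by
        intro z
        induction z using TensorProduct.induction_on with
        | zero => simp only [map_zero, mul_zero]
        | tmul u v =>
          have := hx (ξ u c) (Θ v d)
          rw [swF_apply, hΔl_apply] at this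
          simp only [TensorProduct.map_tmul, LinearMap.mul'_apply, actOnF_apply,
            LinearMap.comp_apply, appl, AlgHom.toLinearMap_apply]
          rw [this, step1 u v (Δ x)]
        | add a b ha hb => simp only [mul_add, map_add, ha, hb]
      rw [show Θ (x * y) = Θ x * Θ y from map_mul Θ x y, Module.End.mul_apply, hy c d,
        swF_apply, hΔl_apply, step2 (Δ y), swF_apply, hΔl_apply,
        show Δ (x * y) = Δ x * Δ y from map_mul Δ x y]
    | add x y hx hy =>
      intro c d
      simp only [map_add, LinearMap.add_apply, hx c d, hy c d]
  -- properties of Φ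
  have P : ∀ (x : F) (c : C), Θ x c = swF Δl (actOnF ξ c) Φ x := by
    intro x c
    have := Q x c 1
    rwa [mul_one] at this
  have prop1 : Φ 1 = 1 := by
    rw [phit_apply, show Θ (1 : FreeAlgebra ℂ M) = 1 from map_one Θ, Module.End.one_apply]
  have prop2 : ∀ m : M, Φ (FreeAlgebra.ι ℂ m) = φ m := by
    intro m
    rw [phit_apply, hΘι m]
    show swF Δl (actOnF ξ 1) φ0 (FreeAlgebra.ι ℂ m) = φ m
    rw [swF_apply, hΔl_apply]
    have e : ∀ z : F ⊗[ℂ] F, LinearMap.mul' ℂ C (TensorProduct.map (actOnF ξ (1 : C)) φ0 z) =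
        φ0 ((TensorProduct.lid ℂ F) ((TensorProduct.map ε.toLinearMap LinearMap.id) z)) := by
      intro z
      induction z using TensorProduct.induction_on with
      | zero => simp
      | tmul a b =>
        simp only [TensorProduct.map_tmul, LinearMap.mul'_apply, actOnF_apply, hξunit,
          LinearMap.id_apply, AlgHom.toLinearMap_apply, TensorProduct.lid_tmul, map_smul,
          smul_mul_assoc, one_mul]
      | add a b ha hb => simp only [map_add, ha, hb]
    rw [e, hcounitl (FreeAlgebra.ι ℂ m)]
    exact FreeAlgebra.lift_ι_apply _ _
  have prop3 : ∀ x y : F, Φ (x * y) = swF Δl (actOnF ξ (Φ y)) Φ x := by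
    intro x y
    rw [phit_apply, show Θ (x * y) = Θ x * Θ y from map_mul Θ x y, Module.End.mul_apply,
      ← phit_apply, ← hΦ, ← P x (Φ y)]
  refine ⟨Φ, ⟨prop1, prop2, prop3⟩, ?_⟩
  -- uniqueness
  rintro ψ ⟨u1, u2, u3⟩
  have agree : ∀ (c : C) (m : M),
      swF Δl (actOnF ξ c) ψ (FreeAlgebra.ι ℂ m) = swF Δl (actOnF ξ c) Φ (FreeAlgebra.ι ℂ m) := by
    intro c m
    rw [swF_apply, swF_apply, hΔl_apply]
    exact key (actOnF ξ c) ψ Φ (by rw [u1, prop1]) (fun m' => by rw [u2 m', prop2 m']) m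
  have words : ∀ l : List F, (∀ y ∈ l, y ∈ Set.range (FreeAlgebra.ι ℂ (X := M))) →
      ψ l.prod = Φ l.prod := by
    intro l
    induction l with
    | nil => intro _; simp only [List.prod_nil]; rw [u1, prop1]
    | cons a l ih =>
      intro hmem
      obtain ⟨m, rfl⟩ := hmem a List.mem_cons_self
      have hl := ih fun y hy => hmem y (List.mem_cons_of_mem _ hy)
      rw [List.prod_cons, u3, prop3, hl, agree]
  ext x
  have hx : x ∈ Submodule.span ℂ
      ((Submonoid.closure (Set.range (FreeAlgebra.ι ℂ (X := M)))) : Set F) := by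
    rw [← Algebra.adjoin_eq_span, FreeAlgebra.adjoin_range_ι]
    exact Submodule.mem_top
  refine Submodule.span_induction (p := fun z _ => ψ z = Φ z) ?_ ?_ ?_ ?_ hx
  · intro z hz
    obtain ⟨l, hl, rfl⟩ := Submonoid.exists_list_of_mem_closure hz
    exact words l hl
  · simp
  · intro z w _ _ hz hw; simp [map_add, hz, hw]
  · intro a z _ hz; simp [map_smul, hz]
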